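/- Let G be a finite abelian group of order u² containing 2m² building blocks ⊤(x,y) and ⊥(x,y), x,y ∈ Z_m, satisfying conditions (1), (2), (3) and (5). Then for every non-principal character ψ of G, ψ(T_{y₁,y₂}) equals either (δ−u)/m or (δ+(m−1)u)/m, where δ = 1 if y₁≠0 and y₂≠0, δ = 1−2m if y₁=y₂=0, and δ = 1−m otherwise. Hence each T_{y₁,y₂} is a partial difference set in G. -/

import Mathlib

open scoped Classical

noncomputable section

/-- Indicator function of a finset, with values in `ℤ`. -/
def ind {α : Type*} (D : Finset α) (g : α) : ℤ := if g ∈ D then 1 else 0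

/-- Character sum `ψ(D) = ∑_{x ∈ D} ψ(x)`. -/
def charSum {G : Type*} [AddCommGroup G] (ψ : AddChar G ℂ) (D : Finset G) : ℂ :=
  ∑ g ∈ D, ψ g

/-- Condition (1): cardinalities of the building blocks. -/
def Cond1 {G : Type*} (m u : ℕ) (T B : ZMod m → ZMod m → Finset G) : Prop :=
  ∀ x y : ZMod m,
    (y ≠ 0 → ((T x y).card : ℚ) = ((u : ℚ) ^ 2 - u) / m ∧
             ((B x y).card : ℚ) = ((u : ℚ) ^ 2 - u) / m) ∧
    (y = 0 → ((T x y).card : ℚ) = ((u : ℚ) ^ 2 - u) / m + u ∧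
             ((B x y).card : ℚ) = ((u : ℚ) ^ 2 - u) / m + u)

/-- Condition (2): for each family and each `x, y`, the translates
`♯(x−z, y+z)`, `z ∈ Z_m`, partition `G`. -/
def Cond2 {G : Type*} (m : ℕ) (T B : ZMod m → ZMod m → Finset G) : Prop :=
  ∀ x y : ZMod m, ∀ g : G,
    (∃! z : ZMod m, g ∈ T (x - z) (y + z)) ∧ (∃! z : ZMod m, g ∈ B (x - z) (y + z))

/-- Condition (3): the character value condition. The boolean in the triple selects
the family (`true` for `⊤`, `false` for `⊥`). -/
def Cond3 {G : Type*} [AddCommGroup G] (m u : ℕ) (T B : ZMod m → ZMod m → Finset G) : Prop :=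
  ∀ ψ : AddChar G ℂ, ψ ≠ 1 →
    ∃! t : ZMod m × ZMod m × Bool,
      (∀ y : ZMod m, y ≠ t.2.1 → charSum ψ ((cond t.2.2 T B) t.1 y) = -(u : ℂ)) ∧
      (∀ x : ZMod m, x ≠ t.1 → charSum ψ ((cond t.2.2 T B) x t.2.1) = (u : ℂ)) ∧
      (∀ x y : ZMod m, (x = t.1 ↔ y = t.2.1) → charSum ψ ((cond t.2.2 T B) x y) = 0) ∧
      (∀ x y : ZMod m, charSum ψ ((cond (!t.2.2) T B) x y) = 0)

/-- `S` is the set `S_x` from condition (4): `0 ∉ S` and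
`∑_{y}(⊤(x,y)+⊥(x,y)) = m·S + G + [0_G]` in the group ring `ℤ[G]`
(stated coefficientwise). -/
def IsSFor {G : Type*} [AddCommGroup G] [Fintype G] (m : ℕ) [NeZero m]
    (T B : ZMod m → ZMod m → Finset G) (x : ZMod m) (S : Finset G) : Prop :=
  (0 : G) ∉ S ∧ ∀ g : G,
    (∑ y : ZMod m, (ind (T x y) g + ind (B x y) g)) =
      m * ind S g + 1 + (if g = 0 then 1 else 0)

/-- Condition (4). -/
def Cond4 {G : Type*} [AddCommGroup G] [Fintype G] (m : ℕ) [NeZero m]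
    (T B : ZMod m → ZMod m → Finset G) : Prop :=
  ∀ x : ZMod m, ∃ S : Finset G, IsSFor m T B x S

/-- `Tset` is the set `T_{y₁,y₂}` from condition (5): `0 ∉ Tset` and
`∑_{x}(⊤(x,y₁)+⊥(x,y₂)) = m·Tset + G + δ'·[0_G]` in `ℤ[G]`, where `δ' = −1` if
`y₁ ≠ 0 ≠ y₂`, `δ' = 2m−1` if `y₁ = y₂ = 0`, and `δ' = m−1` otherwise. -/
def IsTFor {G : Type*} [AddCommGroup G] [Fintype G] (m : ℕ) [NeZero m]
    (T B : ZMod m → ZMod m → Finset G) (y₁ y₂ : ZMod m) (Tset : Finset G) : Prop :=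
  (0 : G) ∉ Tset ∧ ∀ g : G,
    (∑ x : ZMod m, (ind (T x y₁) g + ind (B x y₂) g)) =
      m * ind Tset g + 1 +
        (if y₁ ≠ 0 ∧ y₂ ≠ 0 then (-1 : ℤ)
         else if y₁ = 0 ∧ y₂ = 0 then 2 * (m : ℤ) - 1 else (m : ℤ) - 1) *
          (if g = 0 then 1 else 0)

/-- Condition (5). -/
def Cond5 {G : Type*} [AddCommGroup G] [Fintype G] (m : ℕ) [NeZero m]
    (T B : ZMod m → ZMod m → Finset G) : Prop :=
  ∀ y₁ y₂ : ZMod m, ∃ Tset : Finset G, IsTFor m T B y₁ y₂ Tset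

section Aux

variable {G : Type*} [AddCommGroup G] [Fintype G]

private lemma charSum_eq_sum_ind (ψ : AddChar G ℂ) (D : Finset G) :
    charSum ψ D = ∑ g : G, (ind D g : ℂ) * ψ g := by
  rw [charSum]
  rw [Finset.sum_congr rfl (fun g (_ : g ∈ Finset.univ) => by
    simp only [ind]
    split_ifs with h <;> simp [h] : ∀ g ∈ Finset.univ,
      (ind D g : ℂ) * ψ g = if g ∈ D then ψ g else 0)]
  simp [Finset.sum_ite_mem]

private lemma sum_charSum_mul (D : Finset G) (g : G) :
    ∑ ψ : AddChar G ℂ, charSum ψ D * ψ (-g) =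
      (Fintype.card G : ℂ) * (if g ∈ D then 1 else 0) := by
  simp only [charSum, Finset.sum_mul]
  rw [Finset.sum_comm]
  have h1 : ∀ x ∈ D, ∑ ψ : AddChar G ℂ, ψ x * ψ (-g) =
      if x = g then (Fintype.card G : ℂ) else 0 := by
    intro x _
    simp_rw [← AddChar.map_add_eq_mul]
    rw [AddChar.sum_apply_eq_ite]
    congr 1
    simp [sub_eq_zero, ← sub_eq_add_neg]
  rw [Finset.sum_congr rfl h1]
  simp [Finset.sum_ite_eq, mul_comm]

end Aux
section Part1

variable {G : Type*} [AddCommGroup G] [Fintype G] {m u : ℕ} [NeZero m]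

private lemma part1 {T B : ZMod m → ZMod m → Finset G} (h3 : Cond3 m u T B)
    {y₁ y₂ : ZMod m} {Tset : Finset G} (hT : IsTFor m T B y₁ y₂ Tset)
    (ψ : AddChar G ℂ) (hψ : ψ ≠ 1) :
    charSum ψ Tset = ((if y₁ ≠ 0 ∧ y₂ ≠ 0 then (1 : ℂ)
        else if y₁ = 0 ∧ y₂ = 0 then 1 - 2 * (m : ℂ) else 1 - (m : ℂ)) - u) / m ∨
    charSum ψ Tset = ((if y₁ ≠ 0 ∧ y₂ ≠ 0 then (1 : ℂ)
        else if y₁ = 0 ∧ y₂ = 0 then 1 - 2 * (m : ℂ) else 1 - (m : ℂ)) +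
          ((m : ℂ) - 1) * u) / m := by
  have hψ0 : ψ ≠ 0 := hψ
  have hm : (m : ℂ) ≠ 0 := Nat.cast_ne_zero.2 (NeZero.ne m)
  set δC : ℂ := if y₁ ≠ 0 ∧ y₂ ≠ 0 then (-1 : ℂ)
      else if y₁ = 0 ∧ y₂ = 0 then 2 * (m : ℂ) - 1 else (m : ℂ) - 1 with hδC
  set δG : ℂ := if y₁ ≠ 0 ∧ y₂ ≠ 0 then (1 : ℂ)
      else if y₁ = 0 ∧ y₂ = 0 then 1 - 2 * (m : ℂ) else 1 - (m : ℂ) with hδG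
  have hδ : δG = -δC := by rw [hδC, hδG]; split_ifs <;> ring
  set V : ℂ := ∑ x : ZMod m, (charSum ψ (T x y₁) + charSum ψ (B x y₂)) with hV
  -- Step A
  have hC : ∀ g : G, (∑ x : ZMod m, ((ind (T x y₁) g : ℂ) + (ind (B x y₂) g : ℂ))) =
      (m : ℂ) * (ind Tset g : ℂ) + 1 + δC * (if g = 0 then 1 else 0) := by
    intro g
    have h := congrArg (fun z : ℤ => (z : ℂ)) (hT.2 g)
    push_cast at h
    rw [h, hδC]
  have hA : (m : ℂ) * charSum ψ Tset = V - δC := by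
    have e := Finset.sum_congr rfl (fun g (_ : g ∈ (Finset.univ : Finset G)) =>
      congrArg (· * ψ g) (hC g))
    have e1 : ∑ g : G, (∑ x : ZMod m, ((ind (T x y₁) g : ℂ) + (ind (B x y₂) g : ℂ))) * ψ g
        = V := by
      rw [hV]
      simp_rw [Finset.sum_mul, add_mul]
      rw [Finset.sum_comm]
      refine Finset.sum_congr rfl fun x _ => ?_
      rw [Finset.sum_add_distrib, ← charSum_eq_sum_ind, ← charSum_eq_sum_ind]
    have e2 : ∑ g : G, ((m : ℂ) * (ind Tset g : ℂ) + 1 + δC * (if g = 0 then 1 else 0)) * ψ g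
        = (m : ℂ) * charSum ψ Tset + δC := by
      simp_rw [add_mul, Finset.sum_add_distrib, mul_assoc, ← Finset.mul_sum, one_mul]
      rw [← charSum_eq_sum_ind]
      have h0 : ∑ g : G, ψ g = 0 := AddChar.sum_eq_zero_iff_ne_zero.2 hψ0
      have h1 : ∑ g : G, (if g = 0 then (1 : ℂ) else 0) * ψ g = 1 := by
        rw [Finset.sum_eq_single (0 : G)] <;> simp +contextual
      rw [h0, h1]
      ring
    rw [e1, e2] at e
    linear_combination -e
  -- Step B
  obtain ⟨⟨x', y', b⟩, ⟨hb1, hb2, hb3, hb4⟩, -⟩ := h3 ψ hψ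
  simp only at hb1 hb2 hb3 hb4
  have hcard : ∑ x : ZMod m, (if x = x' then (0 : ℂ) else u) = ((m : ℂ) - 1) * u := by
    have : ∀ x : ZMod m, (if x = x' then (0 : ℂ) else u)
        = u - (if x = x' then (u : ℂ) else 0) := by intro x; split_ifs <;> ring
    simp_rw [this]
    rw [Finset.sum_sub_distrib, Finset.sum_const, Finset.sum_ite_eq' Finset.univ x'
      (fun _ => (u : ℂ))]
    simp [Finset.card_univ, ZMod.card, mul_comm]
    ring
  have hcard2 : ∑ x : ZMod m, (if x = x' then -(u : ℂ) else 0) = -(u : ℂ) := by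
    rw [Finset.sum_ite_eq' Finset.univ x' (fun _ => -(u : ℂ))]
    simp
  have hVval : V = -(u : ℂ) ∨ V = ((m : ℂ) - 1) * u := by
    cases b with
    | true =>
      have hB0 : ∀ x : ZMod m, charSum ψ (B x y₂) = 0 := fun x => hb4 x y₂
      have hVT : V = ∑ x : ZMod m, charSum ψ (T x y₁) := by
        rw [hV]; refine Finset.sum_congr rfl fun x _ => by rw [hB0 x, add_zero]
      by_cases hy : y₁ = y'
      · right
        rw [hVT, Finset.sum_congr rfl (fun x _ => ?_), hcard]
        by_cases hx : x = x'
        · rw [if_pos hx, hx, hy]; exact hb3 x' y' (by simp)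
        · rw [if_neg hx, hy]; exact hb2 x hx
      · left
        rw [hVT, Finset.sum_congr rfl (fun x _ => ?_), hcard2]
        by_cases hx : x = x'
        · rw [if_pos hx, hx]; exact hb1 y₁ hy
        · rw [if_neg hx]; exact hb3 x y₁ (by simp [hx, hy])
    | false =>
      have hT0 : ∀ x : ZMod m, charSum ψ (T x y₁) = 0 := fun x => hb4 x y₁
      have hVB : V = ∑ x : ZMod m, charSum ψ (B x y₂) := by
        rw [hV]; refine Finset.sum_congr rfl fun x _ => by rw [hT0 x, zero_add]
      by_cases hy : y₂ = y'
      · right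
        rw [hVB, Finset.sum_congr rfl (fun x _ => ?_), hcard]
        by_cases hx : x = x'
        · rw [if_pos hx, hx, hy]; exact hb3 x' y' (by simp)
        · rw [if_neg hx, hy]; exact hb2 x hx
      · left
        rw [hVB, Finset.sum_congr rfl (fun x _ => ?_), hcard2]
        by_cases hx : x = x'
        · rw [if_pos hx, hx]; exact hb1 y₂ hy
        · rw [if_neg hx]; exact hb3 x y₂ (by simp [hx, hy])
  rcases hVval with h | h
  · left
    rw [eq_div_iff hm]
    rw [h] at hA
    rw [hδ]
    linear_combination hA
  · right
    rw [eq_div_iff hm]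
    rw [h] at hA
    rw [hδ]
    linear_combination hA

end Part1
section Part2

variable {G : Type*} [AddCommGroup G] [Fintype G] {m u : ℕ} [NeZero m]

private lemma freal {T B : ZMod m → ZMod m → Finset G} (h3 : Cond3 m u T B)
    {y₁ y₂ : ZMod m} {Tset : Finset G} (hT : IsTFor m T B y₁ y₂ Tset)
    (ψ : AddChar G ℂ) : (starRingEnd ℂ) (charSum ψ Tset) = charSum ψ Tset := by
  by_cases hψ : ψ = 1
  · subst hψ; simp [charSum]
  · rcases part1 h3 hT ψ hψ with h | h <;> rw [h] <;> split_ifs <;>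
      simp [map_div₀, map_sub, map_add, map_mul, map_one, map_ofNat]
private lemma tsym {T B : ZMod m → ZMod m → Finset G} (h3 : Cond3 m u T B)
    {y₁ y₂ : ZMod m} {Tset : Finset G} (hT : IsTFor m T B y₁ y₂ Tset) :
    ∀ g ∈ Tset, -g ∈ Tset := by
  intro g hg
  have h1 := sum_charSum_mul Tset g
  have h2 := sum_charSum_mul Tset (-g)
  rw [neg_neg] at h2
  have key : ∑ ψ : AddChar G ℂ, charSum ψ Tset * ψ (-g)
      = (Fintype.card G : ℂ) * (if -g ∈ Tset then 1 else 0) := by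
    have := congrArg (starRingEnd ℂ) h2
    rw [map_sum] at this
    simp only [map_mul, freal h3 hT, ← AddChar.map_neg_eq_conj,
      Complex.conj_natCast] at this
    rw [this]
    split_ifs <;> simp
  rw [h1] at key
  have hn : (Fintype.card G : ℂ) ≠ 0 := Nat.cast_ne_zero.2 Fintype.card_ne_zero
  have := mul_left_cancel₀ hn key
  rw [if_pos hg] at this
  by_contra hng
  rw [if_neg hng] at this
  exact one_ne_zero this

end Part2
section Part3

variable {G : Type*} [AddCommGroup G] [Fintype G] {m u : ℕ} [NeZero m]

private lemma srg {T B : ZMod m → ZMod m → Finset G} (h3 : Cond3 m u T B)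
    {y₁ y₂ : ZMod m} {Tset : Finset G} (hT : IsTFor m T B y₁ y₂ Tset) :
    ∃ k l μ : ℕ,
      (SimpleGraph.fromRel fun a b : G => a - b ∈ Tset).IsSRGWith (Fintype.card G) k l μ := by
  have hsym := tsym h3 hT
  set Gr := SimpleGraph.fromRel fun a b : G => a - b ∈ Tset with hGr
  set N : G → ℕ :=
    fun g => ((Tset ×ˢ Tset).filter (fun q : G × G => q.1 - q.2 = g)).card with hN
  set n : ℂ := (Fintype.card G : ℂ) with hn
  set k : ℂ := (Tset.card : ℂ) with hk
  have hFc : ∀ ψ : AddChar G ℂ, charSum ψ Tset = ∑ t ∈ Tset, ψ (-t) := by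
    intro ψ
    conv_lhs => rw [← freal h3 hT ψ]
    rw [charSum, map_sum]
    exact Finset.sum_congr rfl fun t _ => (AddChar.map_neg_eq_conj ψ t).symm
  have hprod : ∀ g : G, ∑ ψ : AddChar G ℂ, charSum ψ Tset * charSum ψ Tset * ψ (-g)
      = (N g : ℂ) * n := by
    intro g
    have e1 : ∀ ψ : AddChar G ℂ, charSum ψ Tset * charSum ψ Tset * ψ (-g)
        = ∑ x ∈ Tset, ∑ t ∈ Tset, ψ (x + -t + -g) := by
      intro ψ
      nth_rewrite 2 [hFc ψ]
      rw [charSum, Finset.sum_mul_sum, Finset.sum_mul]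
      refine Finset.sum_congr rfl fun x _ => ?_
      rw [Finset.sum_mul]
      refine Finset.sum_congr rfl fun t _ => ?_
      rw [← AddChar.map_add_eq_mul, ← AddChar.map_add_eq_mul]
    simp_rw [e1]
    rw [Finset.sum_comm]
    have e2 : ∀ x ∈ Tset, (∑ ψ : AddChar G ℂ, ∑ t ∈ Tset, ψ (x + -t + -g))
        = ∑ t ∈ Tset, (if x - t = g then n else 0) := by
      intro x _
      rw [Finset.sum_comm]
      refine Finset.sum_congr rfl fun t _ => ?_
      rw [show x + -t + -g = x - t - g from by abel, AddChar.sum_apply_eq_ite]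
      simp [sub_eq_zero, hn]
    rw [Finset.sum_congr rfl e2]
    rw [← Finset.sum_product (f := fun q : G × G => if q.1 - q.2 = g then n else 0)]
    rw [← Finset.sum_filter, Finset.sum_const, nsmul_eq_mul]
  have hF1 : charSum (1 : AddChar G ℂ) Tset = k := by simp [charSum, hk]
  obtain ⟨aC, bC, hab⟩ : ∃ aC bC : ℂ, ∀ ψ : AddChar G ℂ, ψ ≠ 1 →
      charSum ψ Tset = aC ∨ charSum ψ Tset = bC :=
    ⟨_, _, fun ψ hψ => part1 h3 hT ψ hψ⟩
  have hquad : ∀ ψ : AddChar G ℂ, ψ ≠ 1 →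
      charSum ψ Tset * charSum ψ Tset = (aC + bC) * charSum ψ Tset - aC * bC := by
    intro ψ hψ
    rcases hab ψ hψ with h | h <;> rw [h] <;> ring
  have hlin : ∀ g : G, ∑ ψ : AddChar G ℂ, ((aC + bC) * charSum ψ Tset - aC * bC) * ψ (-g)
      = (aC + bC) * (n * (if g ∈ Tset then 1 else 0))
        - aC * bC * (if g = 0 then n else 0) := by
    intro g
    simp_rw [sub_mul, mul_assoc]
    rw [Finset.sum_sub_distrib, ← Finset.mul_sum, ← Finset.mul_sum]
    rw [sum_charSum_mul]
    congr 1
    congr 1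
    rw [← Finset.mul_sum, AddChar.sum_apply_eq_ite]
    simp [neg_eq_zero, hn]
  have hsplit : ∀ g : G, ∑ ψ : AddChar G ℂ, charSum ψ Tset * charSum ψ Tset * ψ (-g)
      = (∑ ψ : AddChar G ℂ, ((aC + bC) * charSum ψ Tset - aC * bC) * ψ (-g))
        + (k * k - ((aC + bC) * k - aC * bC)) := by
    intro g
    rw [← Finset.add_sum_erase _ _ (Finset.mem_univ (1 : AddChar G ℂ)),
        ← Finset.add_sum_erase _ (fun ψ : AddChar G ℂ =>
          ((aC + bC) * charSum ψ Tset - aC * bC) * ψ (-g))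
          (Finset.mem_univ (1 : AddChar G ℂ))]
    have herase : ∑ ψ ∈ Finset.univ.erase (1 : AddChar G ℂ),
        charSum ψ Tset * charSum ψ Tset * ψ (-g)
        = ∑ ψ ∈ Finset.univ.erase (1 : AddChar G ℂ),
          ((aC + bC) * charSum ψ Tset - aC * bC) * ψ (-g) :=
      Finset.sum_congr rfl fun ψ hψ => by
        rw [hquad ψ (Finset.ne_of_mem_erase hψ)]
    rw [herase, hF1]
    simp only [AddChar.one_apply]
    ring
  have hmaster : ∀ g : G, (N g : ℂ) * n
      = (aC + bC) * (n * (if g ∈ Tset then 1 else 0))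
        - aC * bC * (if g = 0 then n else 0) + (k * k - ((aC + bC) * k - aC * bC)) := by
    intro g; rw [← hprod g, hsplit g, hlin g]
  have hn0 : n ≠ 0 := Nat.cast_ne_zero.2 Fintype.card_ne_zero
  have hNconst : ∀ g g' : G, g ≠ 0 → g' ≠ 0 → (g ∈ Tset ↔ g' ∈ Tset) → N g = N g' := by
    intro g g' hg hg' hmem
    have hc : (N g : ℂ) * n = (N g' : ℂ) * n := by
      rw [hmaster g, hmaster g', if_neg hg, if_neg hg']
      by_cases hmm : g ∈ Tset
      · rw [if_pos hmm, if_pos (hmem.1 hmm)]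
      · rw [if_neg hmm, if_neg fun h => hmm (hmem.2 h)]
    exact_mod_cast mul_right_cancel₀ hn0 hc
  have h0mem : ∀ g ∈ Tset, g ≠ 0 := fun g hg h0 => hT.1 (h0 ▸ hg)
  have hadj : ∀ v w : G, Gr.Adj v w ↔ w - v ∈ Tset := by
    intro v w
    rw [hGr, SimpleGraph.fromRel_adj]
    constructor
    · rintro ⟨hne, h | h⟩
      · have := hsym _ h; rwa [neg_sub] at this
      · exact h
    · intro h
      exact ⟨fun he => hT.1 (by rw [he, sub_self] at h; exact h), Or.inr h⟩
  have hdeg : ∀ (v : G) (inst : Fintype (Gr.neighborSet v)),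
      (@SimpleGraph.neighborFinset _ Gr v inst).card = Tset.card := by
    intro v inst
    refine Finset.card_bij' (fun w _ => w - v) (fun t _ => t + v) ?_ ?_ ?_ ?_
    · intro w hw
      exact (hadj v w).1 ((SimpleGraph.mem_neighborFinset _ _ _).1 hw)
    · intro t ht
      rw [SimpleGraph.mem_neighborFinset, hadj]
      simpa using ht
    · intro w _; exact sub_add_cancel _ _
    · intro t _; exact add_sub_cancel_right _ _
  have hcommon : ∀ (v w : G) (inst : Fintype ↥(Gr.commonNeighbors v w)),
      @Fintype.card _ inst = N (w - v) := by
    intro v w inst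
    rw [← Set.toFinset_card]
    refine Finset.card_bij' (fun c _ => (c - v, c - w)) (fun q _ => q.1 + v) ?_ ?_ ?_ ?_
    · intro c hc
      rw [Set.mem_toFinset, SimpleGraph.mem_commonNeighbors] at hc
      rw [Finset.mem_filter, Finset.mem_product]
      exact ⟨⟨(hadj v c).1 hc.1, (hadj w c).1 hc.2⟩, sub_sub_sub_cancel_left v w c⟩
    · intro q hq
      rw [Finset.mem_filter, Finset.mem_product] at hq
      obtain ⟨⟨hq1, hq2⟩, hq3⟩ := hq
      rw [Set.mem_toFinset, SimpleGraph.mem_commonNeighbors, hadj, hadj]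
      constructor
      · simpa using hq1
      · have h5 : q.1 + v - w = q.2 := by
          have h4 : q.1 + v = w + q.2 := by
            rw [sub_eq_sub_iff_add_eq_add] at hq3
            exact hq3
          rw [h4, add_sub_cancel_left]
        rwa [h5]
    · intro c _; exact sub_add_cancel _ _
    · intro q hq
      rw [Finset.mem_filter, Finset.mem_product] at hq
      obtain ⟨⟨hq1, hq2⟩, hq3⟩ := hq
      have h5 : q.1 + v - w = q.2 := by
        have h4 : q.1 + v = w + q.2 := by
          rw [sub_eq_sub_iff_add_eq_add] at hq3
          exact hq3
        rw [h4, add_sub_cancel_left]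
      refine Prod.ext ?_ ?_
      · simp
      · simpa using h5
  refine ⟨Tset.card, if h : Tset.Nonempty then N h.choose else 0,
    if h : ∃ g : G, g ≠ 0 ∧ g ∉ Tset then N h.choose else 0,
    rfl, fun v => hdeg v _, ?_, ?_⟩
  · intro v w hvw
    have hmem : w - v ∈ Tset := (hadj v w).1 hvw
    have hne : Tset.Nonempty := ⟨_, hmem⟩
    refine (hcommon v w _).trans ?_
    rw [dif_pos hne]
    exact hNconst _ _ (h0mem _ hmem) (h0mem _ hne.choose_spec)
      (iff_of_true hmem hne.choose_spec)
  · intro v w hvwne hnadj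
    have hnmem : w - v ∉ Tset := fun h => hnadj ((hadj v w).2 h)
    have hwv : w - v ≠ 0 := sub_ne_zero.2 (Ne.symm hvwne)
    have hex : ∃ g : G, g ≠ 0 ∧ g ∉ Tset := ⟨w - v, hwv, hnmem⟩
    refine (hcommon v w _).trans ?_
    rw [dif_pos hex]
    exact hNconst _ _ hwv hex.choose_spec.1 (iff_of_false hnmem hex.choose_spec.2)

end Part3
theorem stmt_11 {G : Type*} [AddCommGroup G] [Fintype G] (m u : ℕ) [NeZero m]
    (hu : Fintype.card G = u ^ 2)
    (T B : ZMod m → ZMod m → Finset G)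
    (h1 : Cond1 m u T B) (h2 : Cond2 m T B) (h3 : Cond3 m u T B) (h5 : Cond5 m T B) :
    ∀ y₁ y₂ : ZMod m, ∀ Tset : Finset G, IsTFor m T B y₁ y₂ Tset →
      (∀ ψ : AddChar G ℂ, ψ ≠ 1 →
        charSum ψ Tset = ((if y₁ ≠ 0 ∧ y₂ ≠ 0 then (1 : ℂ)
            else if y₁ = 0 ∧ y₂ = 0 then 1 - 2 * (m : ℂ) else 1 - (m : ℂ)) - u) / m ∨
        charSum ψ Tset = ((if y₁ ≠ 0 ∧ y₂ ≠ 0 then (1 : ℂ)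
            else if y₁ = 0 ∧ y₂ = 0 then 1 - 2 * (m : ℂ) else 1 - (m : ℂ)) +
              ((m : ℂ) - 1) * u) / m) ∧
      (∀ g ∈ Tset, -g ∈ Tset) ∧
      (∃ k l μ : ℕ,
        (SimpleGraph.fromRel fun a b : G => a - b ∈ Tset).IsSRGWith
          (Fintype.card G) k l μ) := by
  intro y₁ y₂ Tset hT
  exact ⟨fun ψ hψ => part1 h3 hT ψ hψ, tsym h3 hT, srg h3 hT⟩
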